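/- Let s₀ < 0 and λ₀ = −s₀ > 0. Define c₀ := inf_{λ > 0} (∫_ℝ J(y) e^{λ y} dy − 1 + λ₀)/λ. Then c₀ > 0 and c₀ = c*, where c* is the critical speed determined by Λ(λ(c*), c*) = s₀ with Λ(λ, c) = ∫ J(y) e^{λ y} dy − 1 − c λ and λ(c) the unique positive root of ∫ J(y) e^{λ y} y dy = c. Equivalently, the infimum defining c₀ is attained at λ = λ(c*), and at a critical point λ of H(λ) = (∫ J(y) e^{λ y} dy − 1 + λ₀)/λ one has ∫ J(y) e^{λ y}(λ y − 1) dy = ∫ J(y) e^{λ* y}(λ* y − 1) dy, which forces λ = λ* by strict monotonicity of λ ↦ ∫ J(y) e^{λ y}(λ y − 1) dy. -/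
import Mathlib


open MeasureTheory Filter Set

lemma intA_aux (J : ℝ → ℝ) (hJc : Continuous J)
    (hJnn : ∀ x, 0 ≤ J x) (hJsym : ∀ x, J (-x) = J x)
    (hJexp : ∀ l : ℝ, 0 < l → Integrable (fun x => J x * Real.exp (l * x)))
    (l : ℝ) : Integrable (fun x => J x * Real.exp (l * x)) := by
  rcases lt_trichotomy l 0 with h | h | h
  · have := (hJexp (-l) (by linarith)).comp_neg
    simpa [hJsym, neg_mul_neg] using this
  · subst h
    have h1 := hJexp 1 one_pos
    have h2 := (hJexp 1 one_pos).comp_neg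
    simp only [one_mul] at h1 h2
    have h2' : Integrable (fun x => J x * Real.exp (-x)) := by
      simpa [hJsym] using h2
    apply Integrable.mono' (h1.add h2')
    · exact (hJc.mul (by continuity)).aestronglyMeasurable
    · filter_upwards with x
      rcases le_or_gt 0 x with hx | hx
      · have : (1:ℝ) ≤ Real.exp x := Real.one_le_exp hx
        have := Real.exp_pos (-x)
        simp only [Real.norm_eq_abs, Pi.add_apply, zero_mul, Real.exp_zero, mul_one,
          abs_of_nonneg (hJnn x)]
        nlinarith [hJnn x]
      · have : (1:ℝ) ≤ Real.exp (-x) := Real.one_le_exp (by linarith)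
        have := Real.exp_pos x
        simp only [Real.norm_eq_abs, Pi.add_apply, zero_mul, Real.exp_zero, mul_one,
          abs_of_nonneg (hJnn x)]
        nlinarith [hJnn x]
  · exact hJexp l h

lemma intB_aux (J : ℝ → ℝ) (hJc : Continuous J)
    (hJnn : ∀ x, 0 ≤ J x) (hJsym : ∀ x, J (-x) = J x)
    (hJexp : ∀ l : ℝ, 0 < l → Integrable (fun x => J x * Real.exp (l * x)))
    (l : ℝ) : Integrable (fun x => J x * Real.exp (l * x) * x) := by
  have h1 := intA_aux J hJc hJnn hJsym hJexp (l + 1)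
  have h2 := intA_aux J hJc hJnn hJsym hJexp (l - 1)
  apply Integrable.mono' (h1.add h2)
  · exact ((hJc.mul (by continuity)).mul continuous_id).aestronglyMeasurable
  · filter_upwards with x
    have hep : ∀ t : ℝ, (0:ℝ) < Real.exp t := Real.exp_pos
    have e1 : Real.exp ((l + 1) * x) = Real.exp (l * x) * Real.exp x := by
      rw [← Real.exp_add]; ring_nf
    have e2 : Real.exp ((l - 1) * x) = Real.exp (l * x) * Real.exp (-x) := by
      rw [← Real.exp_add]; ring_nf
    rw [Real.norm_eq_abs, abs_mul, abs_of_nonneg (mul_nonneg (hJnn x) (hep _).le)]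
    simp only [Pi.add_apply]
    rcases le_or_gt 0 x with hx | hx
    · rw [abs_of_nonneg hx]
      have hxe : x ≤ Real.exp x := (Real.add_one_le_exp x).trans' (by linarith)
      nlinarith [hJnn x, hep (l * x), hep ((l-1)*x), mul_nonneg (hJnn x) (hep (l*x)).le]
    · rw [abs_of_neg hx]
      have hxe : -x ≤ Real.exp (-x) := (Real.add_one_le_exp (-x)).trans' (by linarith)
      nlinarith [hJnn x, hep (l * x), hep ((l+1)*x), mul_nonneg (hJnn x) (hep (l*x)).le]

theorem stmt_17 (J : ℝ → ℝ) (hJc : Continuous J) (hJnn : ∀ x, 0 ≤ J x)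
    (hJsym : ∀ x, J (-x) = J x) (hJint : ∫ x, J x = 1) (hJ0 : 0 < J 0)
    (hJexp : ∀ l : ℝ, 0 < l → Integrable (fun x => J x * Real.exp (l * x)))
    (s₀ : ℝ) (hs₀ : s₀ < 0)
    (cstar lamstar : ℝ) (hcstar : 0 < cstar) (hlamstar : 0 < lamstar)
    (hroot : (∫ y, J y * Real.exp (lamstar * y) * y) = cstar)
    (hcrit : (∫ y, J y * Real.exp (lamstar * y)) - 1 - cstar * lamstar = s₀) :
    0 < ⨅ lam : {l : ℝ // 0 < l},
        ((∫ y, J y * Real.exp ((lam : ℝ) * y)) - 1 + (-s₀)) / (lam : ℝ) ∧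
    (⨅ lam : {l : ℝ // 0 < l},
        ((∫ y, J y * Real.exp ((lam : ℝ) * y)) - 1 + (-s₀)) / (lam : ℝ)) = cstar ∧
    ((∫ y, J y * Real.exp (lamstar * y)) - 1 + (-s₀)) / lamstar =
      ⨅ lam : {l : ℝ // 0 < l},
        ((∫ y, J y * Real.exp ((lam : ℝ) * y)) - 1 + (-s₀)) / (lam : ℝ) := by
  have hi1 := intA_aux J hJc hJnn hJsym hJexp lamstar
  have hi2 := intB_aux J hJc hJnn hJsym hJexp lamstar
  have key : ∀ l : ℝ, 0 < l →
      cstar ≤ ((∫ y, J y * Real.exp (l * y)) - 1 + (-s₀)) / l := by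
    intro l hl
    rw [le_div_iff₀ hl]
    have hineq : (∫ y, J y * Real.exp (lamstar * y)) + (l - lamstar) * cstar
        ≤ ∫ y, J y * Real.exp (l * y) := by
      have hsplit : (∫ y, J y * Real.exp (lamstar * y)) + (l - lamstar) * cstar
          = ∫ y, (J y * Real.exp (lamstar * y)
              + (l - lamstar) * (J y * Real.exp (lamstar * y) * y)) := by
        rw [integral_add hi1 (hi2.const_mul _), integral_const_mul, hroot]
      rw [hsplit]
      apply integral_mono (hi1.add (hi2.const_mul _))
        (intA_aux J hJc hJnn hJsym hJexp l)
      intro y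
      have h1 : 1 + (l - lamstar) * y ≤ Real.exp ((l - lamstar) * y) :=
        (Real.add_one_le_exp _).trans_eq' (by ring)
      have h2 : Real.exp (lamstar * y) * Real.exp ((l - lamstar) * y)
          = Real.exp (l * y) := by rw [← Real.exp_add]; ring_nf
      have h3 := mul_le_mul_of_nonneg_left h1
        (mul_nonneg (hJnn y) (Real.exp_pos (lamstar * y)).le)
      simp only [Pi.add_apply]
      nlinarith [hJnn y, Real.exp_pos (lamstar * y)]
    nlinarith
  have hHstar : ((∫ y, J y * Real.exp (lamstar * y)) - 1 + (-s₀)) / lamstar = cstar := by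
    have : (∫ y, J y * Real.exp (lamstar * y)) - 1 + (-s₀) = cstar * lamstar := by linarith
    rw [this]; field_simp
  have hbdd : BddBelow (range fun lam : {l : ℝ // 0 < l} =>
      ((∫ y, J y * Real.exp ((lam : ℝ) * y)) - 1 + (-s₀)) / (lam : ℝ)) := by
    refine ⟨cstar, ?_⟩
    rintro _ ⟨⟨l, hl⟩, rfl⟩
    exact key l hl
  have hle : (⨅ lam : {l : ℝ // 0 < l},
      ((∫ y, J y * Real.exp ((lam : ℝ) * y)) - 1 + (-s₀)) / (lam : ℝ)) ≤ cstar := by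
    have := ciInf_le hbdd (⟨lamstar, hlamstar⟩ : {l : ℝ // 0 < l})
    simpa [hHstar] using this
  have hge : cstar ≤ ⨅ lam : {l : ℝ // 0 < l},
      ((∫ y, J y * Real.exp ((lam : ℝ) * y)) - 1 + (-s₀)) / (lam : ℝ) :=
    le_ciInf fun lam => key lam.1 lam.2
  have heq : (⨅ lam : {l : ℝ // 0 < l},
      ((∫ y, J y * Real.exp ((lam : ℝ) * y)) - 1 + (-s₀)) / (lam : ℝ)) = cstar :=
    le_antisymm hle hge
  exact ⟨heq ▸ hcstar, heq, hHstar.trans heq.symm⟩
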